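/- Assume the form [·,·] is indefinite. Let (x_n) be a sequence of nonzero vectors in H (neutral or non-neutral) converging to some x ∈ H. Then there exists a sequence (J_n) of fundamental symmetries of (H, [·,·]) such that ‖x_n‖_{J_n} → ∞ as n → ∞. -/

import Mathlib

open scoped ComplexOrder

/-- The indefinite (Krein) inner product `[x, y] := ⟪J₀ x, y⟫` induced by the
continuous linear involution `J₀`. -/
noncomputable def kform {H : Type*} [NormedAddCommGroup H] [InnerProductSpace ℂ H]
    (J₀ : H →L[ℂ] H) (x y : H) : ℂ :=
  inner ℂ (J₀ x) y

/-- `J` is a fundamental symmetry of the Krein space `(H, [·,·])`: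
a continuous linear involution, `[·,·]`-selfadjoint, with `[J x, x] > 0` for `x ≠ 0`. -/
def IsFundamentalSymmetry {H : Type*} [NormedAddCommGroup H] [InnerProductSpace ℂ H]
    (J₀ : H →L[ℂ] H) (J : H →L[ℂ] H) : Prop :=
  (∀ x, J (J x) = x) ∧
  (∀ x y, kform J₀ (J x) y = kform J₀ x (J y)) ∧
  (∀ x, x ≠ 0 → 0 < kform J₀ (J x) x)

/-- The `J`-norm `‖x‖_J := [J x, x] ^ (1/2)`. -/
noncomputable def jnorm {H : Type*} [NormedAddCommGroup H] [InnerProductSpace ℂ H]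
    (J₀ : H →L[ℂ] H) (J : H →L[ℂ] H) (x : H) : ℝ :=
  Real.sqrt (kform J₀ (J x) x).re

section aux
variable {H : Type*} [NormedAddCommGroup H] [InnerProductSpace ℂ H] (J₀ : H →L[ℂ] H)
lemma kform_add_right (x y z : H) : kform J₀ x (y + z) = kform J₀ x y + kform J₀ x z := by
  simp [kform, inner_add_right]
lemma kform_smul_right (c : ℂ) (x y : H) : kform J₀ x (c • y) = c * kform J₀ x y := by
  simp [kform, inner_smul_right]
lemma kform_sub_right (x y z : H) : kform J₀ x (y - z) = kform J₀ x y - kform J₀ x z := by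
  simp [kform, inner_sub_right]
lemma kform_add_left (x y z : H) : kform J₀ (x + y) z = kform J₀ x z + kform J₀ y z := by
  simp [kform, inner_add_left]
lemma kform_sub_left (x y z : H) : kform J₀ (x - y) z = kform J₀ x z - kform J₀ y z := by
  simp [kform, inner_sub_left]
lemma kform_smul_left (c : ℂ) (x y : H) :
    kform J₀ (c • x) y = (starRingEnd ℂ) c * kform J₀ x y := by
  simp [kform, inner_smul_left, mul_comm]
lemma kform_conj (hsa : ∀ x y : H, (inner ℂ (J₀ x) y : ℂ) = inner ℂ x (J₀ y)) (x y : H) :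
    kform J₀ x y = (starRingEnd ℂ) (kform J₀ y x) := by
  rw [kform, kform, ← inner_conj_symm, ← hsa]
noncomputable def Uop (e f : H) (t : ℝ) : H →L[ℂ] H :=
  ContinuousLinearMap.id ℂ H
  + ((Real.cosh t - 1 : ℝ) : ℂ) •
      ((innerSL ℂ (J₀ e)).smulRight e - (innerSL ℂ (J₀ f)).smulRight f)
  + ((Real.sinh t : ℝ) : ℂ) •
      ((innerSL ℂ (J₀ e)).smulRight f - (innerSL ℂ (J₀ f)).smulRight e)
lemma Uop_apply (e f : H) (t : ℝ) (z : H) :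
    Uop J₀ e f t z = z
      + ((Real.cosh t - 1 : ℝ) : ℂ) • (kform J₀ e z • e - kform J₀ f z • f)
      + ((Real.sinh t : ℝ) : ℂ) • (kform J₀ e z • f - kform J₀ f z • e) := by
  simp [Uop, kform, smul_sub, ContinuousLinearMap.smulRight_apply]

lemma kform_Uop_left (hsa : ∀ x y : H, (inner ℂ (J₀ x) y : ℂ) = inner ℂ x (J₀ y))
    (e f : H) (t : ℝ) (a b : H) :
    kform J₀ (Uop J₀ e f t a) b = kform J₀ a (Uop J₀ e f (-t) b) := by
  rw [Uop_apply, Uop_apply]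
  simp only [kform_add_left, kform_sub_left, kform_smul_left, kform_add_right,
    kform_sub_right, kform_smul_right, Complex.conj_ofReal, Real.cosh_neg, Real.sinh_neg]
  rw [kform_conj J₀ hsa a e, kform_conj J₀ hsa a f]
  push_cast
  ring
lemma kform_e_Uop {e f : H} (hee : kform J₀ e e = 1) (hef : kform J₀ e f = 0) (t : ℝ) (z : H) :
    kform J₀ e (Uop J₀ e f t z) =
      (Real.cosh t : ℂ) * kform J₀ e z - (Real.sinh t : ℂ) * kform J₀ f z := by
  rw [Uop_apply]
  simp only [kform_add_right, kform_smul_right, kform_sub_right, hee, hef]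
  push_cast; ring
lemma kform_f_Uop {e f : H} (hff : kform J₀ f f = -1) (hfe : kform J₀ f e = 0) (t : ℝ) (z : H) :
    kform J₀ f (Uop J₀ e f t z) =
      (Real.cosh t : ℂ) * kform J₀ f z - (Real.sinh t : ℂ) * kform J₀ e z := by
  rw [Uop_apply]
  simp only [kform_add_right, kform_smul_right, kform_sub_right, hff, hfe]
  push_cast; ring
lemma Uop_inv_apply {e f : H} (hee : kform J₀ e e = 1) (hff : kform J₀ f f = -1)
    (hef : kform J₀ e f = 0) (hfe : kform J₀ f e = 0) (t : ℝ) (z : H) :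
    Uop J₀ e f t (Uop J₀ e f (-t) z) = z := by
  have hC : Complex.cosh t ^ 2 - Complex.sinh t ^ 2 = 1 := Complex.cosh_sq_sub_sinh_sq t
  rw [Uop_apply J₀ e f t, kform_e_Uop J₀ hee hef, kform_f_Uop J₀ hff hfe,
    Uop_apply J₀ e f (-t)]
  simp only [Real.cosh_neg, Real.sinh_neg]
  match_scalars
  · push_cast; ring
  · push_cast; linear_combination (kform J₀ e z) * hC
  · push_cast; linear_combination (-(kform J₀ f z)) * hC

noncomputable def Jop (e f : H) (t : ℝ) : H →L[ℂ] H :=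
  (Uop J₀ e f t).comp (J₀.comp (Uop J₀ e f (-t)))

lemma Jop_apply (e f : H) (t : ℝ) (z : H) :
    Jop J₀ e f t z = Uop J₀ e f t (J₀ (Uop J₀ e f (-t) z)) := rfl

variable (hinv : ∀ x, J₀ (J₀ x) = x)
    (hsa : ∀ x y : H, (inner ℂ (J₀ x) y : ℂ) = inner ℂ x (J₀ y))
    {e f : H} (hee : kform J₀ e e = 1) (hff : kform J₀ f f = -1)
    (hef : kform J₀ e f = 0) (hfe : kform J₀ f e = 0)

lemma kform_Jop_left (hinv : ∀ x, J₀ (J₀ x) = x)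
    (hsa : ∀ x y : H, (inner ℂ (J₀ x) y : ℂ) = inner ℂ x (J₀ y)) (e f : H) (t : ℝ) (x y : H) :
    kform J₀ (Jop J₀ e f t x) y = inner ℂ (Uop J₀ e f (-t) x) (Uop J₀ e f (-t) y) := by
  rw [Jop_apply, kform_Uop_left J₀ hsa, kform]
  rw [hinv]

lemma kform_Jop_right (hinv : ∀ x, J₀ (J₀ x) = x)
    (hsa : ∀ x y : H, (inner ℂ (J₀ x) y : ℂ) = inner ℂ x (J₀ y)) (e f : H) (t : ℝ) (x y : H) :
    kform J₀ x (Jop J₀ e f t y) = inner ℂ (Uop J₀ e f (-t) x) (Uop J₀ e f (-t) y) := by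
  have h := (kform_Uop_left J₀ hsa e f (-t) x (J₀ (Uop J₀ e f (-t) y))).symm
  rw [neg_neg] at h
  rw [Jop_apply, h, kform, hsa, hinv]

lemma Jop_fundamental (hinv : ∀ x, J₀ (J₀ x) = x)
    (hsa : ∀ x y : H, (inner ℂ (J₀ x) y : ℂ) = inner ℂ x (J₀ y))
    {e f : H} (hee : kform J₀ e e = 1) (hff : kform J₀ f f = -1)
    (hef : kform J₀ e f = 0) (hfe : kform J₀ f e = 0) (t : ℝ) :
    (∀ x, Jop J₀ e f t (Jop J₀ e f t x) = x) ∧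
    (∀ x y, kform J₀ (Jop J₀ e f t x) y = kform J₀ x (Jop J₀ e f t y)) ∧
    (∀ x, x ≠ 0 → 0 < kform J₀ (Jop J₀ e f t x) x) := by
  have hUinv : ∀ z, Uop J₀ e f (-t) (Uop J₀ e f t z) = z := by
    intro z
    have := Uop_inv_apply J₀ hee hff hef hfe (-t) z
    rwa [neg_neg] at this
  refine ⟨?_, ?_, ?_⟩
  · intro x
    rw [Jop_apply, Jop_apply, hUinv, hinv, Uop_inv_apply J₀ hee hff hef hfe]
  · intro x y
    rw [kform_Jop_left J₀ hinv hsa, kform_Jop_right J₀ hinv hsa]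
  · intro x hx
    rw [kform_Jop_left J₀ hinv hsa]
    have hw : Uop J₀ e f (-t) x ≠ 0 := by
      intro h
      apply hx
      have := Uop_inv_apply J₀ hee hff hef hfe t x
      rw [h, map_zero] at this
      exact this.symm
    have : (inner ℂ (Uop J₀ e f (-t) x) (Uop J₀ e f (-t) x) : ℂ)
        = ((‖Uop J₀ e f (-t) x‖ ^ 2 : ℝ) : ℂ) := by
      rw [inner_self_eq_norm_sq_to_K]; norm_cast
    rw [this]
    have : (0:ℝ) < ‖Uop J₀ e f (-t) x‖ ^ 2 := pow_pos (norm_pos_iff.mpr hw) 2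
    exact_mod_cast this

lemma jnorm_Jop (hinv : ∀ x, J₀ (J₀ x) = x)
    (hsa : ∀ x y : H, (inner ℂ (J₀ x) y : ℂ) = inner ℂ x (J₀ y)) (e f : H) (t : ℝ) (x : H) :
    Real.sqrt (kform J₀ (Jop J₀ e f t x) x).re = ‖Uop J₀ e f (-t) x‖ := by
  rw [kform_Jop_left J₀ hinv hsa]
  have : (inner ℂ (Uop J₀ e f (-t) x) (Uop J₀ e f (-t) x) : ℂ)
      = ((‖Uop J₀ e f (-t) x‖ ^ 2 : ℝ) : ℂ) := by
    rw [inner_self_eq_norm_sq_to_K]; norm_cast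
  rw [this, Complex.ofReal_re, Real.sqrt_sq (norm_nonneg _)]

lemma Uop_growth {e f : H} (hee : kform J₀ e e = 1) (hff : kform J₀ f f = -1)
    (hef : kform J₀ e f = 0) (hfe : kform J₀ f e = 0) (t : ℝ) (x : H) :
    Real.exp t * ‖kform J₀ (e + f) x‖ ≤ ‖J₀ (e + f)‖ * ‖Uop J₀ e f (-t) x‖ := by
  have key : kform J₀ (e + f) (Uop J₀ e f (-t) x)
      = (Real.exp t : ℂ) * kform J₀ (e + f) x := by
    rw [kform_add_left, kform_e_Uop J₀ hee hef, kform_f_Uop J₀ hff hfe, kform_add_left]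
    simp only [Real.cosh_neg, Real.sinh_neg]
    rw [← Real.cosh_add_sinh]
    push_cast; ring
  have hb : ‖kform J₀ (e + f) (Uop J₀ e f (-t) x)‖
      ≤ ‖J₀ (e + f)‖ * ‖Uop J₀ e f (-t) x‖ := by
    rw [kform]
    exact norm_inner_le_norm (𝕜 := ℂ) (J₀ (e+f)) (Uop J₀ e f (-t) x)
  rw [key] at hb
  rw [norm_mul] at hb
  simpa [Complex.norm_real, Real.norm_eq_abs, abs_of_pos (Real.exp_pos t)] using hb

lemma kform_self_re (hsa : ∀ x y : H, (inner ℂ (J₀ x) y : ℂ) = inner ℂ x (J₀ y)) (x : H) :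
    kform J₀ x x = (((kform J₀ x x).re : ℝ) : ℂ) := by
  have h := kform_conj J₀ hsa x x
  have him : (kform J₀ x x).im = 0 := by
    have h2 := congrArg Complex.im h
    simp only [Complex.conj_im] at h2
    linarith
  apply Complex.ext
  · simp
  · simp [him]

lemma inv_sqrt_sq {r : ℝ} (hr : 0 < r) : (Real.sqrt r)⁻¹ * ((Real.sqrt r)⁻¹ * r) = 1 := by
  have h2 : (Real.sqrt r) ^ 2 = r := Real.sq_sqrt hr.le
  calc (Real.sqrt r)⁻¹ * ((Real.sqrt r)⁻¹ * r) = r / (Real.sqrt r) ^ 2 := by ring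
    _ = r / r := by rw [h2]
    _ = 1 := div_self (ne_of_gt hr)

lemma exists_plane (hinv : ∀ x, J₀ (J₀ x) = x)
    (hsa : ∀ x y : H, (inner ℂ (J₀ x) y : ℂ) = inner ℂ x (J₀ y))
    (hindef : ∃ u v : H, 0 < kform J₀ u u ∧ kform J₀ v v < 0)
    (x : H) (hx : x ≠ 0) :
    ∃ e f : H, kform J₀ e e = 1 ∧ kform J₀ f f = -1 ∧ kform J₀ e f = 0 ∧
      kform J₀ f e = 0 ∧ kform J₀ (e + f) x ≠ 0 := by
  obtain ⟨u, v, hu, hv⟩ := hindef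
  obtain ⟨r, hrdef⟩ : ∃ r : ℝ, r = (kform J₀ x x).re := ⟨_, rfl⟩
  have hxx : kform J₀ x x = (r : ℂ) := by rw [hrdef]; exact kform_self_re J₀ hsa x
  rcases lt_trichotomy r 0 with hr | hr | hr
  · -- negative case : use u
    have hur : 0 < (kform J₀ u u).re := by rw [Complex.lt_def] at hu; exact hu.1
    have huu : kform J₀ u u = (((kform J₀ u u).re : ℝ) : ℂ) := kform_self_re J₀ hsa u
    have hrpos : 0 < -r := by linarith
    have hsq : Real.sqrt (-r) ≠ 0 := Real.sqrt_ne_zero'.mpr hrpos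
    obtain ⟨f, hfdef⟩ : ∃ f : H, f = (((Real.sqrt (-r))⁻¹ : ℝ) : ℂ) • x := ⟨_, rfl⟩
    have hxf : x = ((Real.sqrt (-r) : ℝ) : ℂ) • f := by
      rw [hfdef, smul_smul, ← Complex.ofReal_mul, mul_inv_cancel₀ hsq]
      simp
    have hff : kform J₀ f f = -1 := by
      rw [hfdef, kform_smul_left, kform_smul_right, hxx, Complex.conj_ofReal,
        ← Complex.ofReal_mul, ← Complex.ofReal_mul]
      have : (Real.sqrt (-r))⁻¹ * ((Real.sqrt (-r))⁻¹ * r) = -1 := by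
        have := inv_sqrt_sq hrpos
        nlinarith [this]
      rw [this]
      norm_num
    obtain ⟨c, hcdef⟩ : ∃ c : ℂ, c = kform J₀ f u := ⟨_, rfl⟩
    obtain ⟨w, hwdef⟩ : ∃ w : H, w = u + c • f := ⟨_, rfl⟩
    have hfw : kform J₀ f w = 0 := by
      rw [hwdef, kform_add_right, kform_smul_right, hff, ← hcdef]; ring
    have hwf : kform J₀ w f = 0 := by
      rw [kform_conj J₀ hsa, hfw, map_zero]
    have hfu : kform J₀ u f = (starRingEnd ℂ) c := by
      rw [kform_conj J₀ hsa, hcdef]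
    obtain ⟨s, hsdef⟩ : ∃ s : ℝ, s = (kform J₀ u u).re + Complex.normSq c := ⟨_, rfl⟩
    have hs : 0 < s := by
      have := Complex.normSq_nonneg c
      rw [hsdef]; linarith
    have hwws : kform J₀ w w = (s : ℂ) := by
      have hns : ((Complex.normSq c : ℝ) : ℂ) = c * (starRingEnd ℂ) c :=
        (Complex.mul_conj c).symm
      rw [hwdef]
      simp only [kform_add_left, kform_add_right, kform_smul_left, kform_smul_right,
        hff, ← hcdef, hfu]
      rw [huu, hsdef]
      push_cast
      rw [hns]
      ring
    have hsqs : Real.sqrt s ≠ 0 := Real.sqrt_ne_zero'.mpr hs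
    obtain ⟨e, hedef⟩ : ∃ e : H, e = (((Real.sqrt s)⁻¹ : ℝ) : ℂ) • w := ⟨_, rfl⟩
    have hee : kform J₀ e e = 1 := by
      rw [hedef, kform_smul_left, kform_smul_right, hwws, Complex.conj_ofReal,
        ← Complex.ofReal_mul, ← Complex.ofReal_mul, inv_sqrt_sq hs]
      norm_num
    refine ⟨e, f, hee, hff, ?_, ?_, ?_⟩
    · rw [hedef, kform_smul_left, hwf, mul_zero]
    · rw [hedef, kform_smul_right, hfw, mul_zero]
    · have hwx : kform J₀ w x = 0 := by
        rw [hxf, kform_smul_right, hwf, mul_zero]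
      have hfx : kform J₀ f x = -((Real.sqrt (-r) : ℝ) : ℂ) := by
        rw [hxf, kform_smul_right, hff]; ring
      rw [kform_add_left, hedef, kform_smul_left, hwx, mul_zero, zero_add, hfx]
      simp only [ne_eq, neg_eq_zero, Complex.ofReal_eq_zero]
      exact hsq
  · -- neutral case
    have hxx0 : kform J₀ x x = 0 := by rw [hxx, hr]; simp
    have hJx : J₀ x ≠ 0 := fun h => hx (by rw [← hinv x, h, map_zero])
    obtain ⟨y, hydef⟩ : ∃ y : H, y = (((‖J₀ x‖ ^ 2)⁻¹ : ℝ) : ℂ) • (J₀ x) := ⟨_, rfl⟩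
    have hnx : (0:ℝ) < ‖J₀ x‖ ^ 2 := pow_pos (norm_pos_iff.mpr hJx) 2
    have hxy : kform J₀ x y = 1 := by
      rw [hydef, kform_smul_right, kform, inner_self_eq_norm_sq_to_K]
      have hne : ((‖J₀ x‖ : ℝ) : ℂ) ≠ 0 := by exact_mod_cast norm_ne_zero_iff.mpr hJx
      norm_cast
      field_simp
      change ((1 / ‖J₀ x‖ ^ 2 : ℝ) : ℂ) * ((‖J₀ x‖ ^ 2 : ℝ) : ℂ) = 1
      rw [← Complex.ofReal_mul, one_div_mul_cancel hnx.ne', Complex.ofReal_one]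
    have hyx : kform J₀ y x = 1 := by
      rw [kform_conj J₀ hsa, hxy, map_one]
    have hyy : kform J₀ y y = (((kform J₀ y y).re : ℝ) : ℂ) := kform_self_re J₀ hsa y
    obtain ⟨β, hβdef⟩ : ∃ β : ℝ, β = (kform J₀ y y).re := ⟨_, rfl⟩
    have hyyβ : kform J₀ y y = (β : ℂ) := by rw [hβdef]; exact hyy
    obtain ⟨e, hedef⟩ : ∃ e : H, e = (((1 - β)/2 : ℝ) : ℂ) • x + y := ⟨_, rfl⟩
    obtain ⟨f, hfdef⟩ : ∃ f : H, f = (((-1 - β)/2 : ℝ) : ℂ) • x + y := ⟨_, rfl⟩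
    refine ⟨e, f, ?_, ?_, ?_, ?_, ?_⟩
    · rw [hedef]
      simp only [kform_add_left, kform_add_right, kform_smul_left, kform_smul_right,
        hxx0, hxy, hyx, hyyβ, Complex.conj_ofReal]
      push_cast; ring
    · rw [hfdef]
      simp only [kform_add_left, kform_add_right, kform_smul_left, kform_smul_right,
        hxx0, hxy, hyx, hyyβ, Complex.conj_ofReal]
      push_cast; ring
    · rw [hedef, hfdef]
      simp only [kform_add_left, kform_add_right, kform_smul_left, kform_smul_right,
        hxx0, hxy, hyx, hyyβ, Complex.conj_ofReal]
      push_cast; ring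
    · rw [hedef, hfdef]
      simp only [kform_add_left, kform_add_right, kform_smul_left, kform_smul_right,
        hxx0, hxy, hyx, hyyβ, Complex.conj_ofReal]
      push_cast; ring
    · rw [hedef, hfdef]
      simp only [kform_add_left, kform_smul_left, hxx0, hyx, Complex.conj_ofReal]
      simp only [mul_zero, zero_add]
      norm_num
  · -- positive case : use v
    have hvr : (kform J₀ v v).re < 0 := by rw [Complex.lt_def] at hv; exact hv.1
    have hvv : kform J₀ v v = (((kform J₀ v v).re : ℝ) : ℂ) := kform_self_re J₀ hsa v
    have hsq : Real.sqrt r ≠ 0 := Real.sqrt_ne_zero'.mpr hr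
    obtain ⟨e, hedef⟩ : ∃ e : H, e = (((Real.sqrt r)⁻¹ : ℝ) : ℂ) • x := ⟨_, rfl⟩
    have hxe : x = ((Real.sqrt r : ℝ) : ℂ) • e := by
      rw [hedef, smul_smul, ← Complex.ofReal_mul, mul_inv_cancel₀ hsq]
      simp
    have hee : kform J₀ e e = 1 := by
      rw [hedef, kform_smul_left, kform_smul_right, hxx, Complex.conj_ofReal,
        ← Complex.ofReal_mul, ← Complex.ofReal_mul, inv_sqrt_sq hr]
      norm_num
    obtain ⟨c, hcdef⟩ : ∃ c : ℂ, c = kform J₀ e v := ⟨_, rfl⟩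
    obtain ⟨w, hwdef⟩ : ∃ w : H, w = v - c • e := ⟨_, rfl⟩
    have hew : kform J₀ e w = 0 := by
      rw [hwdef, kform_sub_right, kform_smul_right, hee, ← hcdef]; ring
    have hwe : kform J₀ w e = 0 := by
      rw [kform_conj J₀ hsa, hew, map_zero]
    have hev : kform J₀ v e = (starRingEnd ℂ) c := by
      rw [kform_conj J₀ hsa, hcdef]
    obtain ⟨s, hsdef⟩ : ∃ s : ℝ, s = Complex.normSq c - (kform J₀ v v).re := ⟨_, rfl⟩
    have hs : 0 < s := by
      have := Complex.normSq_nonneg c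
      rw [hsdef]; linarith
    have hwws : kform J₀ w w = ((-s : ℝ) : ℂ) := by
      have hns : ((Complex.normSq c : ℝ) : ℂ) = c * (starRingEnd ℂ) c :=
        (Complex.mul_conj c).symm
      rw [hwdef]
      simp only [kform_sub_left, kform_sub_right, kform_smul_left, kform_smul_right,
        hee, ← hcdef, hev]
      rw [hvv, hsdef]
      push_cast
      rw [hns]
      ring
    have hsqs : Real.sqrt s ≠ 0 := Real.sqrt_ne_zero'.mpr hs
    obtain ⟨f, hfdef⟩ : ∃ f : H, f = (((Real.sqrt s)⁻¹ : ℝ) : ℂ) • w := ⟨_, rfl⟩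
    have hff : kform J₀ f f = -1 := by
      rw [hfdef, kform_smul_left, kform_smul_right, hwws, Complex.conj_ofReal,
        ← Complex.ofReal_mul, ← Complex.ofReal_mul]
      have : (Real.sqrt s)⁻¹ * ((Real.sqrt s)⁻¹ * (-s)) = -1 := by
        have := inv_sqrt_sq hs
        nlinarith [this]
      rw [this]
      norm_num
    refine ⟨e, f, hee, hff, ?_, ?_, ?_⟩
    · rw [hfdef, kform_smul_right, hew, mul_zero]
    · rw [hfdef, kform_smul_left, hwe, mul_zero]
    · have hwx : kform J₀ w x = 0 := by
        rw [hxe, kform_smul_right, hwe, mul_zero]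
      have hex : kform J₀ e x = ((Real.sqrt r : ℝ) : ℂ) := by
        rw [hxe, kform_smul_right, hee, mul_one]
      rw [kform_add_left, hfdef, kform_smul_left, hwx, mul_zero, add_zero, hex]
      simp only [ne_eq, Complex.ofReal_eq_zero]
      exact hsq
end aux

theorem exists_fundamentalSymmetry_seq_jnorm_tendsto_atTop
    {H : Type*} [NormedAddCommGroup H] [InnerProductSpace ℂ H] [CompleteSpace H]
    (J₀ : H →L[ℂ] H)
    (hinv : ∀ x, J₀ (J₀ x) = x)
    (hsa : ∀ x y : H, (inner ℂ (J₀ x) y : ℂ) = inner ℂ x (J₀ y))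
    (hindef : ∃ u v : H, 0 < kform J₀ u u ∧ kform J₀ v v < 0)
    (x : ℕ → H) (hx0 : ∀ n, x n ≠ 0)
    (l : H) (hconv : Filter.Tendsto x Filter.atTop (nhds l)) :
    ∃ J : ℕ → H →L[ℂ] H, (∀ n, IsFundamentalSymmetry J₀ (J n)) ∧
      Filter.Tendsto (fun n => jnorm J₀ (J n) (x n)) Filter.atTop Filter.atTop := by
  choose e f hee hff hef hfe hne using fun n =>
    exists_plane J₀ hinv hsa hindef (x n) (hx0 n)
  have hNpos : ∀ n, 0 < ‖J₀ (e n + f n)‖ := by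
    intro n
    apply norm_pos_iff.mpr
    intro h
    apply hne n
    rw [kform, h, inner_zero_left]
  have hApos : ∀ n, 0 < ‖kform J₀ (e n + f n) (x n)‖ :=
    fun n => norm_pos_iff.mpr (hne n)
  refine ⟨fun n => Jop J₀ (e n) (f n)
      (Real.log (((n : ℝ) + 1) * ‖J₀ (e n + f n)‖ / ‖kform J₀ (e n + f n) (x n)‖)),
    fun n => Jop_fundamental J₀ hinv hsa (hee n) (hff n) (hef n) (hfe n) _, ?_⟩
  have key : ∀ n : ℕ, ((n : ℝ)) ≤ jnorm J₀
      (Jop J₀ (e n) (f n)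
        (Real.log (((n : ℝ) + 1) * ‖J₀ (e n + f n)‖ / ‖kform J₀ (e n + f n) (x n)‖)))
      (x n) := by
    intro n
    set t : ℝ := Real.log (((n : ℝ) + 1) * ‖J₀ (e n + f n)‖ /
      ‖kform J₀ (e n + f n) (x n)‖) with htdef
    have hj : jnorm J₀ (Jop J₀ (e n) (f n) t) (x n) = ‖Uop J₀ (e n) (f n) (-t) (x n)‖ := by
      rw [jnorm]
      exact jnorm_Jop J₀ hinv hsa (e n) (f n) t (x n)
    have hgrow := Uop_growth J₀ (hee n) (hff n) (hef n) (hfe n) t (x n)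
    have hexp : Real.exp t = ((n : ℝ) + 1) * ‖J₀ (e n + f n)‖ /
        ‖kform J₀ (e n + f n) (x n)‖ := by
      rw [htdef]
      exact Real.exp_log (div_pos (mul_pos (by positivity) (hNpos n)) (hApos n))
    rw [hexp] at hgrow
    rw [div_mul_cancel₀ _ (ne_of_gt (hApos n))] at hgrow
    have h2 : (n : ℝ) + 1 ≤ ‖Uop J₀ (e n) (f n) (-t) (x n)‖ := by
      have hN := hNpos n
      nlinarith [hgrow]
    rw [hj]
    linarith
  exact Filter.tendsto_atTop_mono key tendsto_natCast_atTop_atTop
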